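/- If the payoff S_T of the eligible asset is bounded away from zero (S_T ≥ ε·1_Ω for some ε > 0), then for any acceptance set A, the risk measure ρ_{A,S} equals S_0 times the cash-additive risk measure of the discounted position: ρ_{A,S}(x) = S_0 · inf { m ∈ ℝ : x/S_T + m·1_Ω ∈ Ã }, where Ã := { y/S_T : y ∈ A }; in particular ρ_{A,S} is finitely valued and Lipschitz continuous. -/

import Mathlib

open BoundedContinuousFunction MeasureTheory Pointwise

variable {Ω : Type*} [TopologicalSpace Ω] [DiscreteTopology Ω] [Nonempty Ω]

/-- `X` is modeled as the Banach lattice `Ω →ᵇ ℝ` of bounded functions with sup norm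
(the discrete topology makes every function continuous) and pointwise order.
An acceptance set is a nonempty proper monotone subset of `X`. -/
def IsAcceptanceSet (A : Set (Ω →ᵇ ℝ)) : Prop :=
  A.Nonempty ∧ A ≠ Set.univ ∧ ∀ x ∈ A, ∀ y, x ≤ y → y ∈ A

/-- the risk measure `ρ_{A,S}` w.r.t. the acceptance set `A` and the traded asset
`S = (S0, ST)`, with values in the extended reals -/
noncomputable def riskMeasure (A : Set (Ω →ᵇ ℝ)) (S0 : ℝ) (ST : Ω →ᵇ ℝ) (x : Ω →ᵇ ℝ) : EReal :=
  sInf ((fun m : ℝ => (m : EReal)) '' {m : ℝ | x + (m / S0) • ST ∈ A})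

/-- the discounted position `x / S_T`, well defined when `S_T` is bounded away from zero -/
noncomputable def bcfDiv (x ST : Ω →ᵇ ℝ) (ε : ℝ) (hε : 0 < ε) (h : ∀ ω, ε ≤ ST ω) : Ω →ᵇ ℝ :=
  BoundedContinuousFunction.ofNormedAddCommGroup (fun ω => x ω / ST ω)
    continuous_of_discreteTopology (‖x‖ / ε)
    (by
      intro ω
      rw [norm_div]
      apply div_le_div₀ (norm_nonneg x) (x.norm_coe_le_norm ω) hε
      rw [Real.norm_eq_abs, abs_of_pos (lt_of_lt_of_le hε (h ω))]
      exact h ω)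

section Aux

variable (A : Set (Ω →ᵇ ℝ))

lemma bcf_le_of_forall {f g : Ω →ᵇ ℝ} (h : ∀ ω, f ω ≤ g ω) : f ≤ g := h

lemma bcfDiv_apply (x ST : Ω →ᵇ ℝ) (ε : ℝ) (hε : 0 < ε) (h : ∀ ω, ε ≤ ST ω) (ω : Ω) :
    bcfDiv x ST ε hε h ω = x ω / ST ω := rfl

/-- the acceptance set in terms of positions with coefficient `m` on `ST` -/
def Eset (S0 : ℝ) (ST x : Ω →ᵇ ℝ) : Set ℝ := {m : ℝ | x + (m / S0) • ST ∈ A}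

lemma Eset_nonempty (hA : IsAcceptanceSet A) {S0 : ℝ} (hS0 : 0 < S0)
    {ST : Ω →ᵇ ℝ} {ε : ℝ} (hε : 0 < ε) (hb : ∀ ω, ε ≤ ST ω) (x : Ω →ᵇ ℝ) :
    (Eset A S0 ST x).Nonempty := by
  obtain ⟨a, ha⟩ := hA.1
  refine ⟨S0 * (‖a - x‖ / ε), hA.2.2 a ha _ (bcf_le_of_forall fun ω => ?_)⟩
  have h1 : S0 * (‖a - x‖ / ε) / S0 = ‖a - x‖ / ε := by
    field_simp
  simp only [BoundedContinuousFunction.coe_add, BoundedContinuousFunction.coe_smul, Pi.add_apply,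
    Pi.smul_apply, smul_eq_mul, h1]
  have h2 : a ω - x ω ≤ ‖a - x‖ := by
    calc a ω - x ω ≤ |a ω - x ω| := le_abs_self _
    _ = ‖(a - x) ω‖ := by simp [Real.norm_eq_abs]
    _ ≤ ‖a - x‖ := (a - x).norm_coe_le_norm ω
  have h3 : ‖a - x‖ ≤ ‖a - x‖ / ε * ST ω := by
    calc ‖a - x‖ = ‖a - x‖ / ε * ε := by field_simp
    _ ≤ ‖a - x‖ / ε * ST ω :=
      mul_le_mul_of_nonneg_left (hb ω) (div_nonneg (norm_nonneg _) hε.le)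
  linarith

lemma Eset_bddBelow (hA : IsAcceptanceSet A) {S0 : ℝ} (hS0 : 0 < S0)
    {ST : Ω →ᵇ ℝ} {ε : ℝ} (hε : 0 < ε) (hb : ∀ ω, ε ≤ ST ω) (x : Ω →ᵇ ℝ) :
    BddBelow (Eset A S0 ST x) := by
  obtain ⟨b, hb'⟩ : ∃ b, b ∉ A := by
    by_contra h
    push_neg at h
    exact hA.2.1 (Set.eq_univ_of_forall h)
  refine ⟨-(S0 * (‖b - x‖ / ε)), fun m hm => ?_⟩
  by_contra hlt
  push_neg at hlt
  apply hb'
  refine hA.2.2 _ hm b (bcf_le_of_forall fun ω => ?_)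
  simp only [BoundedContinuousFunction.coe_add, BoundedContinuousFunction.coe_smul, Pi.add_apply,
    Pi.smul_apply, smul_eq_mul]
  have hm0 : m / S0 ≤ 0 := by
    apply div_nonpos_of_nonpos_of_nonneg _ hS0.le
    have : 0 ≤ S0 * (‖b - x‖ / ε) :=
      mul_nonneg hS0.le (div_nonneg (norm_nonneg _) hε.le)
    linarith
  have h2 : x ω - b ω ≤ ‖b - x‖ := by
    calc x ω - b ω ≤ |x ω - b ω| := le_abs_self _
    _ = ‖(x - b) ω‖ := by simp [Real.norm_eq_abs]
    _ ≤ ‖x - b‖ := (x - b).norm_coe_le_norm ω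
    _ = ‖b - x‖ := norm_sub_rev _ _
  have h3 : m / S0 * ST ω ≤ m / S0 * ε := mul_le_mul_of_nonpos_left (hb ω) hm0
  have h4 : m / S0 * ε ≤ -‖b - x‖ := by
    have h5 : m / S0 < -(‖b - x‖ / ε) := by
      rw [div_lt_iff₀ hS0]
      have : -(‖b - x‖ / ε) * S0 = -(S0 * (‖b - x‖ / ε)) := by ring
      linarith
    have := mul_le_mul_of_nonneg_right h5.le hε.le
    calc m / S0 * ε ≤ -(‖b - x‖ / ε) * ε := this
    _ = -‖b - x‖ := by field_simp
  linarith

/-- relating `Eset` membership shifts for Lipschitz bounds -/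
lemma Eset_shift (hA : IsAcceptanceSet A) {S0 : ℝ} (hS0 : 0 < S0)
    {ST : Ω →ᵇ ℝ} {ε : ℝ} (hε : 0 < ε) (hb : ∀ ω, ε ≤ ST ω) (x y : Ω →ᵇ ℝ)
    {m : ℝ} (hm : m ∈ Eset A S0 ST y) :
    m + S0 * (‖x - y‖ / ε) ∈ Eset A S0 ST x := by
  refine hA.2.2 _ hm _ (bcf_le_of_forall fun ω => ?_)
  simp only [BoundedContinuousFunction.coe_add, BoundedContinuousFunction.coe_smul, Pi.add_apply,
    Pi.smul_apply, smul_eq_mul]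
  have h1 : (m + S0 * (‖x - y‖ / ε)) / S0 = m / S0 + ‖x - y‖ / ε := by
    field_simp
  rw [h1, add_mul]
  have h2 : y ω - x ω ≤ ‖x - y‖ := by
    calc y ω - x ω ≤ |y ω - x ω| := le_abs_self _
    _ = ‖(y - x) ω‖ := by simp [Real.norm_eq_abs]
    _ ≤ ‖y - x‖ := (y - x).norm_coe_le_norm ω
    _ = ‖x - y‖ := norm_sub_rev _ _
  have h3 : ‖x - y‖ ≤ ‖x - y‖ / ε * ST ω := by
    calc ‖x - y‖ = ‖x - y‖ / ε * ε := by field_simp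
    _ ≤ ‖x - y‖ / ε * ST ω :=
      mul_le_mul_of_nonneg_left (hb ω) (div_nonneg (norm_nonneg _) hε.le)
  linarith

lemma riskMeasure_eq_coe (hA : IsAcceptanceSet A) {S0 : ℝ} (hS0 : 0 < S0)
    {ST : Ω →ᵇ ℝ} {ε : ℝ} (hε : 0 < ε) (hb : ∀ ω, ε ≤ ST ω) (x : Ω →ᵇ ℝ) :
    riskMeasure A S0 ST x = ((sInf (Eset A S0 ST x) : ℝ) : EReal) := by
  rw [riskMeasure]
  exact (Monotone.map_csInf_of_continuousAt (continuous_coe_real_ereal.continuousAt)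
    EReal.coe_strictMono.monotone (Eset_nonempty A hA hS0 hε hb x)
    (Eset_bddBelow A hA hS0 hε hb x)).symm

end Aux

theorem riskMeasure_eq_cash_additive_of_bounded_away
    (A : Set (Ω →ᵇ ℝ)) (hA : IsAcceptanceSet A) (S0 : ℝ) (hS0 : 0 < S0)
    (ST : Ω →ᵇ ℝ) (ε : ℝ) (hε : 0 < ε) (hb : ∀ ω, ε ≤ ST ω) :
    (∀ x : Ω →ᵇ ℝ, riskMeasure A S0 ST x =
      (S0 : EReal) * sInf ((fun m : ℝ => (m : EReal)) ''
        {m : ℝ | bcfDiv x ST ε hε hb + BoundedContinuousFunction.const Ω m ∈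
          {g : Ω →ᵇ ℝ | ∃ y ∈ A, g = bcfDiv y ST ε hε hb}})) ∧
    (∀ x : Ω →ᵇ ℝ, riskMeasure A S0 ST x ≠ ⊤ ∧ riskMeasure A S0 ST x ≠ ⊥) ∧
    ∃ K : NNReal, LipschitzWith K (fun x : Ω →ᵇ ℝ => (riskMeasure A S0 ST x).toReal) := by
  have hSTne : ∀ ω, ST ω ≠ 0 := fun ω => (lt_of_lt_of_le hε (hb ω)).ne'
  refine ⟨?_, ?_, ?_⟩
  · intro x
    -- identify the discounted acceptance condition with `Eset`
    have hset : {m : ℝ | bcfDiv x ST ε hε hb + BoundedContinuousFunction.const Ω m ∈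
        {g : Ω →ᵇ ℝ | ∃ y ∈ A, g = bcfDiv y ST ε hε hb}} =
        {m : ℝ | x + m • ST ∈ A} := by
      ext m
      simp only [Set.mem_setOf_eq]
      constructor
      · rintro ⟨y, hy, heq⟩
        have hyx : y = x + m • ST := by
          ext ω
          have := congrArg (fun g : Ω →ᵇ ℝ => g ω) heq
          simp only [BoundedContinuousFunction.coe_add, Pi.add_apply,
            BoundedContinuousFunction.const_apply, bcfDiv_apply] at this
          have hne := hSTne ω
          simp only [BoundedContinuousFunction.coe_add, BoundedContinuousFunction.coe_smul,
            Pi.add_apply, Pi.smul_apply, smul_eq_mul]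
          field_simp at this
          linarith
        rwa [← hyx]
      · intro h
        refine ⟨x + m • ST, h, ?_⟩
        ext ω
        simp only [BoundedContinuousFunction.coe_add, Pi.add_apply,
          BoundedContinuousFunction.const_apply, bcfDiv_apply,
          BoundedContinuousFunction.coe_smul, Pi.smul_apply, smul_eq_mul]
        rw [eq_div_iff (hSTne ω), add_mul, div_mul_cancel₀ _ (hSTne ω)]
    rw [hset]
    have hFE : {m : ℝ | x + m • ST ∈ A} = S0⁻¹ • Eset A S0 ST x := by
      ext m
      simp only [Set.mem_smul_set, Eset, Set.mem_setOf_eq, smul_eq_mul]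
      constructor
      · intro h
        refine ⟨S0 * m, ?_, by field_simp⟩
        rwa [mul_comm, mul_div_assoc, div_self hS0.ne', mul_one]
      · rintro ⟨n, hn, rfl⟩
        rwa [show S0⁻¹ * n = n / S0 by field_simp]
    have hE := Eset_nonempty A hA hS0 hε hb x
    have hEb := Eset_bddBelow A hA hS0 hε hb x
    have hF : sInf {m : ℝ | x + m • ST ∈ A} = S0⁻¹ * sInf (Eset A S0 ST x) := by
      rw [hFE, Real.sInf_smul_of_nonneg (inv_nonneg.2 hS0.le), smul_eq_mul]
    have hFne : {m : ℝ | x + m • ST ∈ A}.Nonempty := by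
      rw [hFE]; exact hE.smul_set
    have hFbdd : BddBelow {m : ℝ | x + m • ST ∈ A} := by
      rw [hFE]
      obtain ⟨c, hc⟩ := hEb
      exact ⟨S0⁻¹ * c, by
        rintro _ ⟨n, hn, rfl⟩
        exact mul_le_mul_of_nonneg_left (hc hn) (inv_nonneg.2 hS0.le)⟩
    rw [riskMeasure_eq_coe A hA hS0 hε hb x,
      ← Monotone.map_csInf_of_continuousAt (continuous_coe_real_ereal.continuousAt)
        EReal.coe_strictMono.monotone hFne hFbdd, hF, ← EReal.coe_mul]
    congr 1
    field_simp
  · intro x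
    rw [riskMeasure_eq_coe A hA hS0 hε hb x]
    exact ⟨EReal.coe_ne_top _, EReal.coe_ne_bot _⟩
  · refine ⟨⟨S0 / ε, div_nonneg hS0.le hε.le⟩, LipschitzWith.of_dist_le_mul fun x y => ?_⟩
    have key : ∀ u v : Ω →ᵇ ℝ, sInf (Eset A S0 ST u) ≤ sInf (Eset A S0 ST v) +
        S0 * (‖u - v‖ / ε) := by
      intro u v
      have h1 : sInf (Eset A S0 ST u) - S0 * (‖u - v‖ / ε) ≤ sInf (Eset A S0 ST v) := by
        apply le_csInf (Eset_nonempty A hA hS0 hε hb v)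
        intro m hm
        have := csInf_le (Eset_bddBelow A hA hS0 hε hb u) (Eset_shift A hA hS0 hε hb u v hm)
        linarith
      linarith
    simp only [riskMeasure_eq_coe A hA hS0 hε hb, EReal.toReal_coe]
    rw [Real.dist_eq, dist_eq_norm]
    have h1 := key x y
    have h2 := key y x
    rw [norm_sub_rev] at h2
    rw [abs_le]
    have hc : S0 / ε * ‖x - y‖ = S0 * (‖x - y‖ / ε) := by ring
    constructor <;> [change -(S0 / ε * ‖x - y‖) ≤ _; change _ ≤ S0 / ε * ‖x - y‖] <;> linarith
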